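/- Let n ≥ 1, let ζ ∈ ℂ be a primitive third root of unity, let V = (Fin 2 → ℂ) with standard basis vectors e₀, e₁, and let η : V →ₗ[ℂ] V be the linear map with η e₀ = ζ • e₀ and η e₁ = ζ² • e₁. For a : Fin n → ZMod 3, let T_a : ⨂[ℂ]_{i : Fin n} V → ⨂[ℂ]_{i : Fin n} V be the induced map on the n-fold tensor power given in the i-th factor by η^{(a i).val} (i.e., T_a = PiTensorProduct.map (fun i => η^{(a i).val})). Then the set {x ∈ ⨂ V : T_a x = x for every a : Fin n → ZMod 3 with ∑ i, a i = 0} is exactly the ℂ-linear span of the two pure tensors ⨂ᵢ e₀ and ⨂ᵢ e₁; in particular it is 2-dimensional. -/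

import Mathlib

open PiTensorProduct Finset

private lemma zpow_congr3 (ζ : ℂ) (hζ : IsPrimitiveRoot ζ 3) {m k : ℕ}
    (h : (m : ZMod 3) = (k : ZMod 3)) : ζ ^ m = ζ ^ k := by
  have h3 : ζ ^ 3 = 1 := hζ.pow_eq_one
  have hm : ∀ l : ℕ, ζ ^ l = ζ ^ (l % 3) := by
    intro l
    conv_lhs => rw [← Nat.div_add_mod l 3]
    rw [pow_add, pow_mul, h3, one_pow, one_mul]
  rw [hm m, hm k, (ZMod.natCast_eq_natCast_iff' m k 3).mp h]

private lemma eig3 (ζ : ℂ) (η : Module.End ℂ (Fin 2 → ℂ))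
    (he0 : η ![1, 0] = ζ • ![1, 0]) (he1 : η ![0, 1] = ζ ^ 2 • ![0, 1]) :
    ∀ (k : ℕ) (j : Fin 2),
      (η ^ k) (![![1, 0], ![0, 1]] j) = ζ ^ (k * ![1, 2] j) • ![![1, 0], ![0, 1]] j := by
  intro k
  induction k with
  | zero => intro j; simp
  | succ k ih =>
    intro j
    rw [pow_succ', Module.End.mul_apply, ih j, map_smul]
    fin_cases j
    · show ζ ^ (k * 1) • η ![1, 0] = ζ ^ ((k + 1) * 1) • ![1, 0]
      rw [he0, smul_smul, mul_one, mul_one, ← pow_succ]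
    · show ζ ^ (k * 2) • η ![0, 1] = ζ ^ ((k + 1) * 2) • ![0, 1]
      rw [he1, smul_smul, ← pow_add]
      congr 1
      ring

theorem invariants_of_order_three_action (n : ℕ) (hn : 1 ≤ n)
    (ζ : ℂ) (hζ : IsPrimitiveRoot ζ 3)
    (η : Module.End ℂ (Fin 2 → ℂ))
    (he0 : η ![1, 0] = ζ • ![1, 0])
    (he1 : η ![0, 1] = ζ ^ 2 • ![0, 1]) :
    {x : PiTensorProduct ℂ (fun _ : Fin n => Fin 2 → ℂ) |
        ∀ a : Fin n → ZMod 3, ∑ i, a i = 0 →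
          PiTensorProduct.map (fun i => η ^ (a i).val) x = x} =
      ↑(Submodule.span ℂ
        {PiTensorProduct.tprod ℂ (fun _ : Fin n => (![1, 0] : Fin 2 → ℂ)),
         PiTensorProduct.tprod ℂ (fun _ : Fin n => (![0, 1] : Fin 2 → ℂ))}) ∧
    Module.finrank ℂ (Submodule.span ℂ
        {PiTensorProduct.tprod ℂ (fun _ : Fin n => (![1, 0] : Fin 2 → ℂ)),
         PiTensorProduct.tprod ℂ (fun _ : Fin n => (![0, 1] : Fin 2 → ℂ))}) = 2 := by
  classical
  set e : Fin 2 → (Fin 2 → ℂ) := ![![1, 0], ![0, 1]] with he_def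
  set w : Fin 2 → ℕ := ![1, 2] with hw_def
  set B : (Fin n → Fin 2) → PiTensorProduct ℂ (fun _ : Fin n => Fin 2 → ℂ) :=
    fun f => tprod ℂ (fun i => e (f i)) with hB_def
  set g0 : PiTensorProduct ℂ (fun _ : Fin n => Fin 2 → ℂ) :=
    tprod ℂ (fun _ : Fin n => (![1, 0] : Fin 2 → ℂ)) with hg0_def
  set g1 : PiTensorProduct ℂ (fun _ : Fin n => Fin 2 → ℂ) :=
    tprod ℂ (fun _ : Fin n => (![0, 1] : Fin 2 → ℂ)) with hg1_def
  set S : Set (PiTensorProduct ℂ (fun _ : Fin n => Fin 2 → ℂ)) := {g0, g1} with hS_def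
  -- characters
  set ε : ZMod 3 → ℂ := fun z => ζ ^ z.val with hε_def
  set E : (Fin n → ZMod 3) → (Fin n → Fin 2) → ZMod 3 :=
    fun a f => ∑ i, a i * (w (f i) : ZMod 3) with hE_def
  have hεcast : ∀ m : ℕ, ε (m : ZMod 3) = ζ ^ m := by
    intro m
    refine (zpow_congr3 ζ hζ ?_).symm
    simp [ZMod.natCast_val, ZMod.cast_id]
  have hεadd : ∀ x y : ZMod 3, ε (x + y) = ε x * ε y := by
    intro x y
    obtain ⟨x, rfl⟩ := ZMod.natCast_rightInverse.surjective x
    obtain ⟨y, rfl⟩ := ZMod.natCast_rightInverse.surjective y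
    rw [← Nat.cast_add, hεcast, hεcast, hεcast, pow_add]
  -- the basic eigenvalue computation
  have hmap : ∀ (a : Fin n → ZMod 3) (f : Fin n → Fin 2),
      PiTensorProduct.map (fun i => η ^ (a i).val) (B f) = ε (E a f) • B f := by
    intro a f
    rw [hB_def]
    rw [PiTensorProduct.map_tprod]
    have h1 : (fun i => (η ^ (a i).val) (e (f i)))
        = fun i => ζ ^ ((a i).val * w (f i)) • e (f i) :=
      funext fun i => eig3 ζ η he0 he1 ((a i).val) (f i)
    rw [h1, MultilinearMap.map_smul_univ, Finset.prod_pow_eq_pow_sum]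
    congr 1
    rw [hε_def]
    refine zpow_congr3 ζ hζ ?_
    rw [hE_def]
    push_cast [ZMod.natCast_val, ZMod.cast_id]
    rfl
  -- invariance group as a finset
  set G : Finset (Fin n → ZMod 3) := univ.filter (fun a => ∑ i, a i = 0) with hG_def
  have h0G : (0 : Fin n → ZMod 3) ∈ G := by simp [hG_def]
  have hNne : ((G.card : ℂ)) ≠ 0 := by
    exact_mod_cast Nat.cast_ne_zero.mpr (Finset.card_ne_zero_of_mem h0G)
  -- E at constant functions
  have hEconst : ∀ (a : Fin n → ZMod 3), ∑ i, a i = 0 →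
      ∀ c : Fin 2, E a (fun _ => c) = 0 := by
    intro a ha c
    rw [hE_def]
    simp only [← Finset.sum_mul, ha, zero_mul]
  -- character sum vanishes for nonconstant f
  have hcharsum : ∀ f : Fin n → Fin 2, (∃ i j, f i = 0 ∧ f j = 1) →
      ∑ a ∈ G, ε (E a f) = 0 := by
    rintro f ⟨i, j, hi, hj⟩
    have hij : i ≠ j := by
      intro h; rw [h, hj] at hi; exact absurd hi (by decide)
    set a₀ : Fin n → ZMod 3 := fun k => if k = i then 1 else if k = j then 2 else 0 with ha₀_def
    have hsplit : ∀ (c : Fin n → ZMod 3) (k : Fin n), a₀ k * c k =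
        (if k = i then c i else 0) + (if k = j then 2 * c j else 0) := by
      intro c k
      have hak : a₀ k = if k = i then 1 else if k = j then 2 else 0 := rfl
      rw [hak]
      rcases eq_or_ne k i with rfl | h1
      · rw [if_pos rfl, if_pos rfl, if_neg hij, one_mul, add_zero]
      · rcases eq_or_ne k j with rfl | h2
        · rw [if_neg h1, if_pos rfl, if_neg h1, if_pos rfl, zero_add]
        · rw [if_neg h1, if_neg h2, if_neg h1, if_neg h2, zero_mul, add_zero]
    have ha₀G : a₀ ∈ G := by
      rw [hG_def, Finset.mem_filter]
      refine ⟨Finset.mem_univ _, ?_⟩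
      have : ∀ k, a₀ k = a₀ k * (fun _ => (1 : ZMod 3)) k := by intro k; simp
      calc ∑ k, a₀ k = ∑ k, ((if k = i then (1 : ZMod 3) else 0) + (if k = j then 2 * 1 else 0)) := by
            refine Finset.sum_congr rfl fun k _ => ?_
            rw [this k, hsplit (fun _ => 1) k]
        _ = 0 := by
            rw [Finset.sum_add_distrib, Finset.sum_ite_eq' , Finset.sum_ite_eq']
            simp only [Finset.mem_univ, if_true, mul_one]
            decide
    have hEa₀ : E a₀ f = 2 := by
      rw [hE_def]
      calc ∑ k, a₀ k * (w (f k) : ZMod 3)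
          = ∑ k, ((if k = i then (w (f i) : ZMod 3) else 0)
              + (if k = j then 2 * (w (f j) : ZMod 3) else 0)) :=
            Finset.sum_congr rfl fun k _ => hsplit (fun k => (w (f k) : ZMod 3)) k
        _ = 2 := by
            rw [Finset.sum_add_distrib, Finset.sum_ite_eq', Finset.sum_ite_eq']
            simp only [Finset.mem_univ, if_true, hi, hj, hw_def,
              Matrix.cons_val_zero, Matrix.cons_val_one, Matrix.head_cons]
            decide
    have hεa₀ : ε (E a₀ f) ≠ 1 := by
      rw [hEa₀]
      have : ε 2 = ζ ^ 2 := by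
        have := hεcast 2; simpa using this
      rw [this]
      exact hζ.pow_ne_one_of_pos_of_lt (by norm_num) (by norm_num)
    have hre : ∑ a ∈ G, ε (E (a + a₀) f) = ∑ a ∈ G, ε (E a f) := by
      refine Finset.sum_equiv (Equiv.addRight a₀) ?_ ?_
      · intro a
        rw [hG_def]
        simp only [Finset.mem_filter, Finset.mem_univ, true_and, Equiv.coe_addRight]
        have ha₀sum : ∑ k, a₀ k = 0 := by
          rw [hG_def, Finset.mem_filter] at ha₀G; exact ha₀G.2
        constructor
        · intro h
          simp [Pi.add_apply, Finset.sum_add_distrib, h, ha₀sum]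
        · intro h
          have : ∑ k, (a k + a₀ k) = ∑ k, a k + ∑ k, a₀ k := Finset.sum_add_distrib
          rw [Pi.add_def] at h
          rw [this, ha₀sum, add_zero] at h
          exact h
      · intro a _
        rfl
    have hEadd : ∀ a, E (a + a₀) f = E a f + E a₀ f := by
      intro a
      rw [hE_def]
      simp [add_mul, Finset.sum_add_distrib]
    have hS2 : ∑ a ∈ G, ε (E a f) = (∑ a ∈ G, ε (E a f)) * ε (E a₀ f) := by
      conv_lhs => rw [← hre]
      rw [Finset.sum_mul]
      refine Finset.sum_congr rfl fun a _ => ?_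
      rw [hEadd a, hεadd]
    have h' : (∑ a ∈ G, ε (E a f)) * (ε (E a₀ f) - 1) = 0 := by
      rw [mul_sub, mul_one, ← hS2, sub_self]
    rcases mul_eq_zero.mp h' with h | h
    · exact h
    · exact absurd (sub_eq_zero.mp h) hεa₀
  -- the averaging (unnormalized) projector
  set P : Module.End ℂ (PiTensorProduct ℂ (fun _ : Fin n => Fin 2 → ℂ)) :=
    ∑ a ∈ G, PiTensorProduct.map (fun i => η ^ (a i).val) with hP_def
  have hPB : ∀ f : Fin n → Fin 2, P (B f) = (∑ a ∈ G, ε (E a f)) • B f := by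
    intro f
    rw [hP_def, LinearMap.sum_apply, Finset.sum_smul]
    exact Finset.sum_congr rfl fun a _ => hmap a f
  -- P of any basis tensor lands in the span
  have hPBmem : ∀ f : Fin n → Fin 2, P (B f) ∈ Submodule.span ℂ S := by
    intro f
    rw [hPB]
    by_cases h0 : ∀ i, f i = 0
    · have : B f = g0 := by
        rw [hB_def, hg0_def]
        have hff : (fun i => e (f i)) = (fun _ : Fin n => (![1, 0] : Fin 2 → ℂ)) := by
          funext i
          rw [h0 i]
          rfl
        exact congrArg (⇑(PiTensorProduct.tprod ℂ)) hff
      rw [this]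
      exact Submodule.smul_mem _ _ (Submodule.subset_span (by simp [hS_def]))
    · by_cases h1 : ∀ i, f i = 1
      · have : B f = g1 := by
          rw [hB_def, hg1_def]
          have hff : (fun i => e (f i)) = (fun _ : Fin n => (![0, 1] : Fin 2 → ℂ)) := by
            funext i
            rw [h1 i]
            rfl
          exact congrArg (⇑(PiTensorProduct.tprod ℂ)) hff
        rw [this]
        exact Submodule.smul_mem _ _ (Submodule.subset_span (by simp [hS_def]))
      · push_neg at h0 h1
        obtain ⟨j, hj⟩ := h0
        obtain ⟨i, hi⟩ := h1
        have hi0 : f i = 0 := by omega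
        have hj1 : f j = 1 := by omega
        rw [hcharsum f ⟨i, j, hi0, hj1⟩, zero_smul]
        exact Submodule.zero_mem _
  -- every vector is sent into the span by P
  have hPmem : ∀ y, P y ∈ Submodule.span ℂ S := by
    intro y
    have hy : y ∈ Submodule.span ℂ (Set.range ⇑(PiTensorProduct.tprod ℂ)) := by
      rw [PiTensorProduct.span_tprod_eq_top]; trivial
    induction hy using Submodule.span_induction with
    | mem z hz =>
      obtain ⟨v, rfl⟩ := hz
      have hv : v = fun i => ∑ jj : Fin 2, v i jj • e jj := by
        funext i
        funext k
        rw [he_def]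
        fin_cases k <;> simp [Fin.sum_univ_two]
      have hexp : PiTensorProduct.tprod ℂ v = ∑ f : Fin n → Fin 2, (∏ i, v i (f i)) • B f := by
        conv_lhs => rw [hv]
        rw [MultilinearMap.map_sum]
        exact Finset.sum_congr rfl fun f _ => MultilinearMap.map_smul_univ _ _ _
      rw [hexp, map_sum]
      refine Submodule.sum_mem _ fun f _ => ?_
      rw [map_smul]
      exact Submodule.smul_mem _ _ (hPBmem f)
    | zero => rw [map_zero]; exact Submodule.zero_mem _
    | add x y hx hy ihx ihy => rw [map_add]; exact Submodule.add_mem _ ihx ihy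
    | smul c x hx ihx => rw [map_smul]; exact Submodule.smul_mem _ _ ihx
  constructor
  · ext x
    simp only [Set.mem_setOf_eq, SetLike.mem_coe]
    constructor
    · -- invariant ⟹ in span
      intro hx
      have hPx : P x = (G.card : ℂ) • x := by
        rw [hP_def, LinearMap.sum_apply]
        rw [Finset.sum_congr rfl (fun a ha => hx a (by
          rw [hG_def, Finset.mem_filter] at ha; exact ha.2))]
        rw [Finset.sum_const, ← Nat.cast_smul_eq_nsmul ℂ]
      have : x = (G.card : ℂ)⁻¹ • P x := by
        rw [hPx, smul_smul, inv_mul_cancel₀ hNne, one_smul]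
      rw [this]
      exact Submodule.smul_mem _ _ (hPmem x)
    · -- in span ⟹ invariant
      intro hx a ha
      induction hx using Submodule.span_induction with
      | mem z hz =>
        rcases hz with hz | hz
        · have hz0 : z = B (fun _ => 0) := by rw [hz, hg0_def, hB_def]; rfl
          rw [hz0, hmap a, hEconst a ha 0]
          have : ε 0 = 1 := by simpa using hεcast 0
          rw [this, one_smul]
        · have hz1 : z = B (fun _ => 1) := by
            rw [Set.mem_singleton_iff.mp hz, hg1_def, hB_def]; rfl
          rw [hz1, hmap a, hEconst a ha 1]
          have : ε 0 = 1 := by simpa using hεcast 0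
          rw [this, one_smul]
      | zero => rw [map_zero]
      | add x y hx hy ihx ihy => rw [map_add, ihx, ihy]
      | smul c x hx ihx => rw [map_smul, ihx]
  · -- dimension count
    have hφ : ∀ (j : Fin 2) (v : Fin n → (Fin 2 → ℂ)),
        PiTensorProduct.lift
          ((MultilinearMap.mkPiAlgebra ℂ (Fin n) ℂ).compLinearMap
            (fun _ => (LinearMap.proj j : (Fin 2 → ℂ) →ₗ[ℂ] ℂ))) (tprod ℂ v) = ∏ i, v i j := by
      intro j v
      rw [PiTensorProduct.lift.tprod]
      simp [MultilinearMap.compLinearMap_apply, MultilinearMap.mkPiAlgebra_apply]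
    set φ0 := PiTensorProduct.lift
      ((MultilinearMap.mkPiAlgebra ℂ (Fin n) ℂ).compLinearMap
        (fun _ : Fin n => (LinearMap.proj (0 : Fin 2) : (Fin 2 → ℂ) →ₗ[ℂ] ℂ))) with hφ0_def
    set φ1 := PiTensorProduct.lift
      ((MultilinearMap.mkPiAlgebra ℂ (Fin n) ℂ).compLinearMap
        (fun _ : Fin n => (LinearMap.proj (1 : Fin 2) : (Fin 2 → ℂ) →ₗ[ℂ] ℂ))) with hφ1_def
    have hφ00 : φ0 g0 = 1 := by
      rw [hφ0_def, hg0_def, hφ 0]; simp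
    have hφ01 : φ0 g1 = 0 := by
      rw [hφ0_def, hg1_def, hφ 0]
      simp [Finset.prod_const, zero_pow (by omega : n ≠ 0)]
    have hφ11 : φ1 g1 = 1 := by
      rw [hφ1_def, hg1_def, hφ 1]; simp
    have hli : LinearIndependent ℂ ![g0, g1] := by
      rw [linearIndependent_fin2]
      constructor
      · intro h
        simp only [Matrix.cons_val_one, Matrix.head_cons, Matrix.cons_val_zero] at h
        rw [h, map_zero] at hφ11
        exact one_ne_zero hφ11.symm
      · intro c h
        simp only [Matrix.cons_val_one, Matrix.head_cons, Matrix.cons_val_zero] at h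
        have := congrArg φ0 h
        rw [map_smul, hφ01, hφ00, smul_zero] at this
        exact one_ne_zero this.symm
    have hrange : Set.range ![g0, g1] = S := by
      rw [hS_def]
      ext x
      simp [Fin.exists_fin_two, or_comm]
    have := finrank_span_eq_card hli
    rw [hrange] at this
    rw [hS_def] at this ⊢
    rw [this]
    simp
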